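/- Under the LTE assumptions (conditional independence of (T₀, T₁) and Z given σ(X), overlap for e, and monotonicity T₀ ≤ T₁ a.s.), the first-stage weight identifies the proportion of compliers: E[Z·T/e − (1−Z)·T/(1−e)] = ℙ(T₁ > T₀). (This is the identification of κ₁(e) in Example 2.2.) -/

import Mathlib

open MeasureTheory ProbabilityTheory Set


lemma aux_weight_integral {Ω : Type*} {m : MeasurableSpace Ω} {mΩ : MeasurableSpace Ω}
    (hm : m ≤ mΩ) (P : Measure Ω) [IsProbabilityMeasure P]
    (s t : Set Ω) (hs : MeasurableSet s) (ht : MeasurableSet t)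
    (q : Ω → ℝ) (hq : q =ᵐ[P] P⟦t|m⟧) (ε : ℝ) (hε : 0 < ε)
    (hqb : ∀ᵐ ω ∂P, ε ≤ q ω)
    (hmul : P⟦s ∩ t|m⟧ =ᵐ[P] fun ω => (P⟦s|m⟧) ω * (P⟦t|m⟧) ω) :
    ∫ ω, (s ∩ t).indicator (fun _ => (1:ℝ)) ω / q ω ∂P = (P s).toReal := by
  set Q : Ω → ℝ := P⟦t|m⟧ with hQ
  have hqb' : ∀ᵐ ω ∂P, ε ≤ Q ω := by
    filter_upwards [hqb, hq] with ω h1 h2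
    rw [← h2]; exact h1
  set F : Ω → ℝ := fun ω => (Q ω)⁻¹ with hF
  set G : Ω → ℝ := (s ∩ t).indicator (fun _ => (1:ℝ)) with hG
  have hFsm : StronglyMeasurable[m] F :=
    (stronglyMeasurable_condExp.measurable.inv).stronglyMeasurable
  have hGint : Integrable G P := (integrable_const (1:ℝ)).indicator (hs.inter ht)
  have hFb : ∀ᵐ ω ∂P, ‖F ω‖ ≤ ε⁻¹ := by
    filter_upwards [hqb'] with ω hω
    have h0 : 0 < Q ω := lt_of_lt_of_le hε hω
    rw [Real.norm_eq_abs, abs_of_nonneg (inv_nonneg.2 h0.le)]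
    exact inv_anti₀ hε hω
  -- step 1: replace q by Q
  have step1 : ∫ ω, G ω / q ω ∂P = ∫ ω, (F * G) ω ∂P := by
    refine integral_congr_ae ?_
    filter_upwards [hq] with ω hω
    simp [hF, Pi.mul_apply, hω, div_eq_inv_mul]
  rw [step1]
  have hpull : P[F * G|m] =ᵐ[P] F * P[G|m] :=
    condExp_stronglyMeasurable_mul_of_bound hm hFsm hGint ε⁻¹ hFb
  have hkey : P[F * G|m] =ᵐ[P] P⟦s|m⟧ := by
    filter_upwards [hpull, hmul, hqb'] with ω h1 h2 h3
    have h0 : Q ω ≠ 0 := (lt_of_lt_of_le hε h3).ne'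
    rw [h1, Pi.mul_apply, hG]
    show (Q ω)⁻¹ * (P⟦s ∩ t|m⟧) ω = _
    rw [h2]
    field_simp
  have hFGint : Integrable (F * G) P := by
    refine Integrable.mono' (integrable_const ε⁻¹)
      (((hFsm.mono hm).aestronglyMeasurable).mul hGint.aestronglyMeasurable) ?_
    filter_upwards [hFb] with ω hω
    rw [Pi.mul_apply, norm_mul]
    have hGb : ‖G ω‖ ≤ 1 := by
      rw [hG, Real.norm_eq_abs]
      rcases Set.indicator_eq_zero_or_self (s ∩ t) (fun _ => (1:ℝ)) ω with h | h <;>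
        simp [h]
    calc ‖F ω‖ * ‖G ω‖ ≤ ε⁻¹ * 1 := by
          exact mul_le_mul hω hGb (norm_nonneg _) (by positivity)
      _ = ε⁻¹ := mul_one _
  calc ∫ ω, (F * G) ω ∂P = ∫ ω, (P[F * G|m]) ω ∂P := (integral_condExp hm).symm
    _ = ∫ ω, (P⟦s|m⟧) ω ∂P := integral_congr_ae hkey
    _ = ∫ ω, s.indicator (fun _ => (1:ℝ)) ω ∂P := integral_condExp hm
    _ = (P s).toReal := by rw [integral_indicator_const (1:ℝ) hs]; simp [measureReal_def]

lemma lte_main {Ω : Type*} {m : MeasurableSpace Ω} {mΩ : MeasurableSpace Ω}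
    [StandardBorelSpace Ω] [Nonempty Ω] (hm : m ≤ mΩ)
    (P : Measure Ω) [IsProbabilityMeasure P]
    (Z T0 T1 T : Ω → ℝ)
    (hZ : Measurable Z) (hT0 : Measurable T0) (hT1 : Measurable T1)
    (hZbin : ∀ ω, Z ω = 0 ∨ Z ω = 1)
    (hT0bin : ∀ ω, T0 ω = 0 ∨ T0 ω = 1) (hT1bin : ∀ ω, T1 ω = 0 ∨ T1 ω = 1)
    (hTdef : ∀ ω, T ω = Z ω * T1 ω + (1 - Z ω) * T0 ω)
    (hci : CondIndepFun m hm (fun ω => (T0 ω, T1 ω)) Z P)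
    (e : Ω → ℝ) (he : e =ᵐ[P] P[Z | m])
    (ε : ℝ) (hε : 0 < ε)
    (hoverlap : ∀ᵐ ω ∂P, ε ≤ e ω ∧ e ω ≤ 1 - ε)
    (hmono : ∀ᵐ ω ∂P, T0 ω ≤ T1 ω) :
    ∫ ω, (Z ω * T ω / e ω - (1 - Z ω) * T ω / (1 - e ω)) ∂P
      = (P {ω | T0 ω < T1 ω}).toReal := by
  set W : Ω → ℝ × ℝ := fun ω => (T0 ω, T1 ω) with hW
  set A1 : Set Ω := W ⁻¹' (Prod.snd ⁻¹' {1}) with hA1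
  set A0 : Set Ω := W ⁻¹' (Prod.fst ⁻¹' {1}) with hA0
  set B1 : Set Ω := Z ⁻¹' {1} with hB1
  set B0 : Set Ω := Z ⁻¹' {0} with hB0
  have hA1m : MeasurableSet A1 := (hT0.prodMk hT1) ((measurableSet_singleton (1:ℝ)).preimage measurable_snd)
  have hA0m : MeasurableSet A0 := (hT0.prodMk hT1) ((measurableSet_singleton (1:ℝ)).preimage measurable_fst)
  have hB1m : MeasurableSet B1 := hZ (measurableSet_singleton (1:ℝ))
  have hB0m : MeasurableSet B0 := hZ (measurableSet_singleton (0:ℝ))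
  have hfac := (condIndepFun_iff_condExp_inter_preimage_eq_mul
      (m' := m) (hm' := hm) (μ := P) (hT0.prodMk hT1) hZ).mp hci
  have h1 : P⟦A1 ∩ B1|m⟧ =ᵐ[P] fun ω => (P⟦A1|m⟧) ω * (P⟦B1|m⟧) ω :=
    hfac (Prod.snd ⁻¹' {1}) {1} ((measurableSet_singleton (1:ℝ)).preimage measurable_snd)
      (measurableSet_singleton (1:ℝ))
  have h0 : P⟦A0 ∩ B0|m⟧ =ᵐ[P] fun ω => (P⟦A0|m⟧) ω * (P⟦B0|m⟧) ω :=
    hfac (Prod.fst ⁻¹' {1}) {0} ((measurableSet_singleton (1:ℝ)).preimage measurable_fst)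
      (measurableSet_singleton (0:ℝ))
  -- Z is the indicator of B1
  have hZind : Z = B1.indicator (fun _ => (1:ℝ)) := by
    funext ω
    rcases hZbin ω with h | h <;>
      simp [Set.indicator_apply, hB1, Set.mem_preimage, h]
  have he1 : e =ᵐ[P] P⟦B1|m⟧ := by
    have : P[Z|m] = P⟦B1|m⟧ := by rw [hZind]
    exact he.trans (by rw [this])
  -- 1 - Z is the indicator of B0
  have hZind0 : (fun ω => (1:ℝ) - Z ω) = B0.indicator (fun _ => (1:ℝ)) := by
    funext ω
    rcases hZbin ω with h | h <;>
      simp [Set.indicator_apply, hB0, Set.mem_preimage, h]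
  have intZ : Integrable Z P := by
    refine Integrable.mono' (integrable_const (1:ℝ)) hZ.aestronglyMeasurable ?_
    filter_upwards with ω
    rcases hZbin ω with h | h <;> simp [h]
  have he0 : (fun ω => 1 - e ω) =ᵐ[P] P⟦B0|m⟧ := by
    have hsub : P[(fun _ => (1:ℝ)) - Z|m] =ᵐ[P] P[(fun _ => (1:ℝ))|m] - P[Z|m] :=
      condExp_sub (integrable_const 1) intZ m
    have hconst : P[(fun _ => (1:ℝ))|m] = fun _ => (1:ℝ) := condExp_const hm 1
    have heq : P⟦B0|m⟧ = P[(fun _ => (1:ℝ)) - Z|m] := by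
      have h' : (fun _ => (1:ℝ)) - Z = B0.indicator (fun _ => (1:ℝ)) := by
        funext ω
        simpa using congrFun hZind0 ω
      rw [h']
    rw [heq]
    filter_upwards [hsub, he] with ω hω h2
    rw [hω, Pi.sub_apply, hconst, h2]
  -- rewrite the integrand pointwise
  have hpt : ∀ ω, Z ω * T ω / e ω - (1 - Z ω) * T ω / (1 - e ω)
      = (A1 ∩ B1).indicator (fun _ => (1:ℝ)) ω / e ω
        - (A0 ∩ B0).indicator (fun _ => (1:ℝ)) ω / (1 - e ω) := by
    intro ω
    have hmem1 : ω ∈ A1 ↔ T1 ω = 1 := Iff.rfl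
    have hmem0 : ω ∈ A0 ↔ T0 ω = 1 := Iff.rfl
    rcases hZbin ω with h | h
    · have hZT : Z ω * T ω = (A1 ∩ B1).indicator (fun _ => (1:ℝ)) ω := by
        have : ω ∉ B1 := by simp [hB1, Set.mem_preimage, h]
        rw [Set.indicator_of_notMem (by simp [this]), h, zero_mul]
      have hZT' : (1 - Z ω) * T ω = (A0 ∩ B0).indicator (fun _ => (1:ℝ)) ω := by
        have hb : ω ∈ B0 := by simp [hB0, Set.mem_preimage, h]
        rw [hTdef, h]
        rcases hT0bin ω with h0' | h0'
        · have : ω ∉ A0 := by simp [hmem0, h0']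
          rw [Set.indicator_of_notMem (by simp [this, hb]), h0']
          ring
        · have : ω ∈ A0 := by simp [hmem0, h0']
          rw [Set.indicator_of_mem (Set.mem_inter this hb), h0']
          ring
      rw [hZT, hZT']
    · have hZT : Z ω * T ω = (A1 ∩ B1).indicator (fun _ => (1:ℝ)) ω := by
        have hb : ω ∈ B1 := by simp [hB1, Set.mem_preimage, h]
        rw [hTdef, h]
        rcases hT1bin ω with h1' | h1'
        · have : ω ∉ A1 := by simp [hmem1, h1']
          rw [Set.indicator_of_notMem (by simp [this, hb]), h1']
          ring
        · have : ω ∈ A1 := by simp [hmem1, h1']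
          rw [Set.indicator_of_mem (Set.mem_inter this hb), h1']
          ring
      have hZT' : (1 - Z ω) * T ω = (A0 ∩ B0).indicator (fun _ => (1:ℝ)) ω := by
        have : ω ∉ B0 := by simp [hB0, Set.mem_preimage, h]
        rw [Set.indicator_of_notMem (by simp [this]), h, sub_self, zero_mul]
      rw [hZT, hZT']
  have heae : AEMeasurable e P :=
    ((stronglyMeasurable_condExp.mono hm).measurable.aemeasurable).congr he.symm
  have hov1 : ∀ᵐ ω ∂P, ε ≤ e ω := hoverlap.mono fun ω hω => hω.1
  have hov0 : ∀ᵐ ω ∂P, ε ≤ 1 - e ω := hoverlap.mono fun ω hω => by linarith [hω.2]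
  have intTerm : ∀ (s : Set Ω) (hs : MeasurableSet s) (q : Ω → ℝ)
      (hq : AEMeasurable q P) (hqb : ∀ᵐ ω ∂P, ε ≤ q ω),
      Integrable (fun ω => s.indicator (fun _ => (1:ℝ)) ω / q ω) P := by
    intro s hs q hq hqb
    refine Integrable.mono' (integrable_const ε⁻¹)
      (((measurable_const.indicator hs).aemeasurable.div hq).aestronglyMeasurable) ?_
    filter_upwards [hqb] with ω hω
    have h0 : 0 < q ω := lt_of_lt_of_le hε hω
    rw [Real.norm_eq_abs, abs_div, abs_of_pos h0, div_le_iff₀ h0]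
    have : |s.indicator (fun _ => (1:ℝ)) ω| ≤ 1 := by
      rcases Set.indicator_eq_zero_or_self s (fun _ => (1:ℝ)) ω with hh | hh <;> simp [hh]
    calc |s.indicator (fun _ => (1:ℝ)) ω| ≤ 1 := this
      _ = ε⁻¹ * ε := by field_simp
      _ ≤ ε⁻¹ * q ω := by
          exact mul_le_mul_of_nonneg_left hω (by positivity)
  have int1 := intTerm (A1 ∩ B1) (hA1m.inter hB1m) e heae hov1
  have int0 := intTerm (A0 ∩ B0) (hA0m.inter hB0m) (fun ω => 1 - e ω)
    (aemeasurable_const.sub heae) hov0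
  calc ∫ ω, (Z ω * T ω / e ω - (1 - Z ω) * T ω / (1 - e ω)) ∂P
      = ∫ ω, ((A1 ∩ B1).indicator (fun _ => (1:ℝ)) ω / e ω
          - (A0 ∩ B0).indicator (fun _ => (1:ℝ)) ω / (1 - e ω)) ∂P := by
        exact integral_congr_ae (Filter.Eventually.of_forall fun ω => hpt ω)
    _ = (∫ ω, (A1 ∩ B1).indicator (fun _ => (1:ℝ)) ω / e ω ∂P)
        - ∫ ω, (A0 ∩ B0).indicator (fun _ => (1:ℝ)) ω / (1 - e ω) ∂P :=
        integral_sub int1 int0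
    _ = (P A1).toReal - (P A0).toReal := by
        rw [aux_weight_integral hm P A1 B1 hA1m hB1m e he1 ε hε hov1 h1,
          aux_weight_integral hm P A0 B0 hA0m hB0m (fun ω => 1 - e ω) he0 ε hε hov0 h0]
    _ = (P {ω | T0 ω < T1 ω}).toReal := by
        have e1 : (P A1).toReal = ∫ ω, T1 ω ∂P := by
          have : ∀ ω, T1 ω = A1.indicator (fun _ => (1:ℝ)) ω := by
            intro ω
            rcases hT1bin ω with h | h <;>
              simp [Set.indicator_apply, hA1, Set.mem_preimage, hW, h]
          rw [integral_congr_ae (Filter.Eventually.of_forall this),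
            integral_indicator_const (1:ℝ) hA1m]
          simp [measureReal_def]
        have e0 : (P A0).toReal = ∫ ω, T0 ω ∂P := by
          have : ∀ ω, T0 ω = A0.indicator (fun _ => (1:ℝ)) ω := by
            intro ω
            rcases hT0bin ω with h | h <;>
              simp [Set.indicator_apply, hA0, Set.mem_preimage, hW, h]
          rw [integral_congr_ae (Filter.Eventually.of_forall this),
            integral_indicator_const (1:ℝ) hA0m]
          simp [measureReal_def]
        have intT1 : Integrable T1 P := by
          refine Integrable.mono' (integrable_const (1:ℝ)) hT1.aestronglyMeasurable ?_
          filter_upwards with ω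
          rcases hT1bin ω with h | h <;> simp [h]
        have intT0 : Integrable T0 P := by
          refine Integrable.mono' (integrable_const (1:ℝ)) hT0.aestronglyMeasurable ?_
          filter_upwards with ω
          rcases hT0bin ω with h | h <;> simp [h]
        have hsetm : MeasurableSet {ω | T0 ω < T1 ω} := measurableSet_lt hT0 hT1
        rw [e1, e0, ← integral_sub intT1 intT0]
        have : (fun ω => T1 ω - T0 ω)
            =ᵐ[P] {ω | T0 ω < T1 ω}.indicator (fun _ => (1:ℝ)) := by
          filter_upwards [hmono] with ω hω
          rcases hT0bin ω with h0' | h0' <;> rcases hT1bin ω with h1' | h1' <;>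
            simp [Set.indicator_apply, h0', h1'] <;> norm_num
          · exfalso; rw [h0', h1'] at hω; linarith
        rw [integral_congr_ae this, integral_indicator_const (1:ℝ) hsetm]
        simp [measureReal_def]

/-- Under the LTE assumptions — `(T₀, T₁) ⫫ Z | σ(X)`, overlap
(`ε ≤ e ≤ 1 − ε` a.s. for some `ε > 0`, `e` a version of `E[Z | σ(X)]`), and monotonicity
`T₀ ≤ T₁` a.s. — with realized treatment `T = Z·T₁ + (1−Z)·T₀`, the first-stage weight
identifies the proportion of compliers:
`E[Z·T/e − (1−Z)·T/(1−e)] = P(T₁ > T₀)`. -/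
theorem first_stage_weight_identifies_complier_share
    {Ω : Type*} [MeasurableSpace Ω] [StandardBorelSpace Ω] [Nonempty Ω]
    (P : Measure Ω) [IsProbabilityMeasure P] {k : ℕ}
    (Z T0 T1 T : Ω → ℝ) (X : Ω → Fin k → ℝ)
    (hZ : Measurable Z) (hT0 : Measurable T0) (hT1 : Measurable T1) (hX : Measurable X)
    (hZbin : ∀ ω, Z ω = 0 ∨ Z ω = 1)
    (hT0bin : ∀ ω, T0 ω = 0 ∨ T0 ω = 1) (hT1bin : ∀ ω, T1 ω = 0 ∨ T1 ω = 1)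
    (hTdef : ∀ ω, T ω = Z ω * T1 ω + (1 - Z ω) * T0 ω)
    (hci : CondIndepFun (MeasurableSpace.comap X inferInstance)
        (measurable_iff_comap_le.mp hX) (fun ω => (T0 ω, T1 ω)) Z P)
    (e : Ω → ℝ) (he : e =ᵐ[P] P[Z | MeasurableSpace.comap X inferInstance])
    (ε : ℝ) (hε : 0 < ε)
    (hoverlap : ∀ᵐ ω ∂P, ε ≤ e ω ∧ e ω ≤ 1 - ε)
    (hmono : ∀ᵐ ω ∂P, T0 ω ≤ T1 ω) :
    ∫ ω, (Z ω * T ω / e ω - (1 - Z ω) * T ω / (1 - e ω)) ∂P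
      = (P {ω | T0 ω < T1 ω}).toReal :=
  lte_main (measurable_iff_comap_le.mp hX) P Z T0 T1 T hZ hT0 hT1 hZbin hT0bin hT1bin
    hTdef hci e he ε hε hoverlap hmono
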